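/- Let O be a discrete valuation ring with fraction field F, V a finite-dimensional F-vector space with a nondegenerate symmetric F-bilinear form. For full O-lattices L ⊆ M in V, the dual lattices satisfy M∨ ⊆ L∨ and length_O(L∨/M∨) = length_O(M/L). -/

import Mathlib

/-- Length of a module, as the Krull dimension of its lattice of submodules. -/
noncomputable def moduleLength (R M : Type*) [Ring R] [AddCommGroup M] [Module R M] :
    WithBot ℕ∞ :=
  Order.krullDim (Submodule R M)

/-- For full `O`-lattices `L ⊆ M` in a vector space with a nondegenerate symmetric bilinear
form, the duals satisfy `M∨ ⊆ L∨` and `length(L∨/M∨) = length(M/L)`. -/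
theorem length_dual_quotient_eq_length_quotient
    {O F V : Type*} [CommRing O] [IsDomain O] [IsDiscreteValuationRing O]
    [Field F] [Algebra O F] [IsFractionRing O F]
    [AddCommGroup V] [Module F V] [FiniteDimensional F V]
    [Module O V] [IsScalarTower O F V]
    (B : V →ₗ[F] V →ₗ[F] F)
    (hsymm : ∀ x y, B x y = B y x)
    (hnondeg : ∀ x, (∀ y, B x y = 0) → x = 0)
    (L M Ld Md : Submodule O V)
    (hLfull : L.FG ∧ Submodule.span F (L : Set V) = ⊤)
    (hMfull : M.FG ∧ Submodule.span F (M : Set V) = ⊤)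
    (hLd : ∀ v : V, v ∈ Ld ↔ ∀ x ∈ L, B v x ∈ Set.range (algebraMap O F))
    (hMd : ∀ v : V, v ∈ Md ↔ ∀ x ∈ M, B v x ∈ Set.range (algebraMap O F))
    (hLM : L ≤ M) :
    Md ≤ Ld ∧
    moduleLength O (↥Ld ⧸ (Md.comap Ld.subtype)) =
      moduleLength O (↥M ⧸ (L.comap M.subtype)) := by
  classical
  have hMdLd : Md ≤ Ld := by
    intro v hv
    rw [hLd]
    intro x hx
    exact (hMd v).mp hv x (hLM hx)
  refine ⟨hMdLd, ?_⟩
  -- `O`-scalars act without zero divisors on `V`.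
  have halg : Function.Injective (algebraMap O F) := IsFractionRing.injective O F
  haveI : NoZeroSMulDivisors O V := by
    refine ⟨fun {c v} h => ?_⟩
    by_cases hc : c = 0
    · exact Or.inl hc
    · refine Or.inr ?_
      have h' : (algebraMap O F c) • v = 0 := by rwa [algebraMap_smul]
      have hc' : (algebraMap O F c) ≠ 0 := fun h0 => hc (halg (by simpa using h0))
      exact (smul_eq_zero.mp h').resolve_left hc'
  haveI : Module.Finite O ↥M := Module.Finite.iff_fg.mpr hMfull.1
  haveI : Module.Free O ↥M := Module.free_of_finite_type_torsion_free'
  set ι := Module.Free.ChooseBasisIndex O ↥M with hι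
  let b : Module.Basis ι O ↥M := Module.Free.chooseBasis O ↥M
  set N : Submodule O ↥M := L.comap M.subtype with hN
  obtain ⟨n, snf⟩ := N.smithNormalForm b
  -- the family `e` in `V`
  set e : ι → V := fun i => ((snf.bM i : ↥M) : V) with he
  have hMspan : M = Submodule.span O (Set.range e) := by
    conv_lhs => rw [← Submodule.map_subtype_top M, ← snf.bM.span_eq, Submodule.map_span]
    rw [← Set.range_comp]
    rfl
  have hg : ∀ i : Fin n, ((snf.bN i : ↥M) : V) = snf.a i • e (snf.f i) := by
    intro i
    have := congrArg (fun x : ↥M => (x : V)) (snf.snf i)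
    simpa using this
  set g : Fin n → V := fun i => ((snf.bN i : ↥M) : V) with hgdef
  have hLspan : L = Submodule.span O (Set.range g) := by
    have h1 : Submodule.map M.subtype N = L := by
      rw [hN, Submodule.map_comap_subtype]
      exact inf_eq_right.mpr hLM
    conv_lhs => rw [← h1, ← Submodule.map_subtype_top N, ← snf.bN.span_eq,
      Submodule.map_span, Submodule.map_span]
    rw [← Set.range_comp, ← Set.range_comp]
    rfl
  -- linear independence over `F`
  have heli : LinearIndependent F e := by
    rw [← LinearIndependent.iff_fractionRing O F]
    have := snf.bM.linearIndependent
    exact this.map' M.subtype (Submodule.ker_subtype M)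
  have hgli : LinearIndependent F g := by
    rw [← LinearIndependent.iff_fractionRing O F]
    have := snf.bN.linearIndependent
    exact (this.map' N.subtype (Submodule.ker_subtype N)).map' M.subtype
      (Submodule.ker_subtype M)
  have hespan : Submodule.span F (Set.range e) = ⊤ := by
    rw [← Submodule.span_span_of_tower O, ← hMspan, hMfull.2]
  have hgspan : Submodule.span F (Set.range g) = ⊤ := by
    rw [← Submodule.span_span_of_tower O, ← hLspan, hLfull.2]
  let eV : Module.Basis ι F V := Module.Basis.mk heli hespan.ge
  have heV : ∀ i, eV i = e i := fun i => Module.Basis.mk_apply heli hespan.ge i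
  let gV : Module.Basis (Fin n) F V := Module.Basis.mk hgli hgspan.ge
  haveI : Fintype ι := Module.Free.ChooseBasisIndex.fintype O ↥M
  have hcard : Fintype.card (Fin n) = Fintype.card ι := by
    rw [← Module.finrank_eq_card_basis gV, ← Module.finrank_eq_card_basis eV]
  have hfbij : Function.Bijective snf.f :=
    (Fintype.bijective_iff_injective_and_card snf.f).mpr ⟨snf.f.injective, hcard⟩
  let σ : Fin n ≃ ι := Equiv.ofBijective snf.f hfbij
  set a' : ι → O := fun j => snf.a (σ.symm j) with ha'
  have haN : ∀ j : ι, g (σ.symm j) = a' j • e j := by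
    intro j
    simp only [hgdef]
    rw [hg (σ.symm j), show snf.f (σ.symm j) = j from σ.apply_symm_apply j]
  have hLspan' : L = Submodule.span O (Set.range fun j : ι => a' j • e j) := by
    rw [hLspan]
    congr 1
    ext v
    constructor
    · rintro ⟨i, rfl⟩
      refine ⟨σ i, ?_⟩
      have h1 := haN (σ i)
      rw [σ.symm_apply_apply] at h1
      exact h1.symm
    · rintro ⟨j, rfl⟩
      exact ⟨σ.symm j, haN j⟩
  have ha0 : ∀ j, algebraMap O F (a' j) ≠ 0 := by
    intro j h0
    have : a' j = 0 := halg (by simpa using h0)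
    have hgz : g (σ.symm j) = 0 := by rw [haN j, this, zero_smul]
    have h1 : ((snf.bN (σ.symm j) : ↥M) : V) = 0 := hgz
    exact snf.bN.ne_zero (σ.symm j) (Subtype.ext (Subtype.ext (by simpa using h1)))
  -- the bilinear form as an equivalence with the dual
  have hBinj : Function.Injective B := by
    rw [← LinearMap.ker_eq_bot]
    rw [LinearMap.ker_eq_bot']
    intro x hx
    exact hnondeg x fun y => by rw [hx]; rfl
  have hBsurj : Function.Surjective B := by
    have : Module.finrank F V = Module.finrank F (Module.Dual F V) :=
      (Subspace.dual_finrank_eq).symm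
    exact (LinearMap.injective_iff_surjective_of_finrank_eq_finrank this).mp hBinj
  let Beq : V ≃ₗ[F] Module.Dual F V := LinearEquiv.ofBijective B ⟨hBinj, hBsurj⟩
  let fV : Module.Basis ι F V := eV.dualBasis.map Beq.symm
  have hfV : ∀ i, B (fV i) = eV.dualBasis i := by
    intro i
    have : Beq (fV i) = eV.dualBasis i := by
      simp [fV]
    exact this
  have hdual : ∀ i j, B (fV i) (e j) = if j = i then 1 else 0 := by
    intro i j
    rw [hfV i, ← heV j]
    exact eV.dualBasis_apply_self i j
  -- coordinates w.r.t. `fV` are given by pairing with `e`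
  have hrepr : ∀ (v : V) (j : ι), B v (e j) = fV.repr v j := by
    have key : ∀ j : ι, B.flip (e j) = fV.coord j := by
      intro j
      apply fV.ext
      intro i
      rw [LinearMap.flip_apply, hdual i j, Module.Basis.coord_apply, Module.Basis.repr_self_apply]
      by_cases h : i = j <;> simp [h, Ne.symm]
    intro v j
    have := congrArg (fun f => f v) (key j)
    simpa using this
  -- description of Md
  have hMd_eq : Md = Submodule.span O (Set.range fV) := by
    ext v
    rw [hMd v, fV.mem_span_iff_repr_mem O]
    constructor
    · intro h i
      rw [← hrepr v i]
      exact h (e i) (hMspan ▸ Submodule.subset_span ⟨i, rfl⟩)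
    · intro h x hx
      rw [hMspan] at hx
      induction hx using Submodule.span_induction with
      | mem x hx =>
        obtain ⟨i, rfl⟩ := hx
        rw [hrepr v i]
        exact h i
      | zero => exact ⟨0, by simp⟩
      | add x y _ _ hx hy =>
        obtain ⟨r, hr⟩ := hx; obtain ⟨s, hs⟩ := hy
        exact ⟨r + s, by simp [hr, hs]⟩
      | smul c x _ hx =>
        obtain ⟨r, hr⟩ := hx
        refine ⟨c * r, ?_⟩
        rw [map_mul, hr, ← algebraMap_smul F c x, map_smul, smul_eq_mul]
  -- scaled basis for Ld
  let u : ι → Fˣ := fun j => (Units.mk0 (algebraMap O F (a' j)) (ha0 j))⁻¹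
  let fV' : Module.Basis ι F V := fV.unitsSMul u
  have hfV' : ∀ j, fV' j = (algebraMap O F (a' j))⁻¹ • fV j := by
    intro j
    rw [Module.Basis.unitsSMul_apply]
    rfl
  have hfV'repr : ∀ (v : V) (j : ι), fV'.repr v j = algebraMap O F (a' j) * fV.repr v j := by
    intro v j
    rw [Module.Basis.repr_unitsSMul]
    simp [u, Units.smul_def]
  have hpair : ∀ (v : V) (j : ι), B v (a' j • e j) = algebraMap O F (a' j) * fV.repr v j := by
    intro v j
    rw [← algebraMap_smul F (a' j) (e j), map_smul, smul_eq_mul, hrepr v j]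
  have hLd_eq : Ld = Submodule.span O (Set.range fV') := by
    ext v
    rw [hLd v, fV'.mem_span_iff_repr_mem O]
    constructor
    · intro h j
      rw [hfV'repr v j, ← hpair v j]
      exact h _ (hLspan' ▸ Submodule.subset_span ⟨j, rfl⟩)
    · intro h x hx
      rw [hLspan'] at hx
      induction hx using Submodule.span_induction with
      | mem x hx =>
        obtain ⟨j, rfl⟩ := hx
        rw [hpair v j, ← hfV'repr v j]
        exact h j
      | zero => exact ⟨0, by simp⟩
      | add x y _ _ hx hy =>
        obtain ⟨r, hr⟩ := hx; obtain ⟨s, hs⟩ := hy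
        exact ⟨r + s, by simp [hr, hs]⟩
      | smul c x _ hx =>
        obtain ⟨r, hr⟩ := hx
        refine ⟨c * r, ?_⟩
        rw [map_mul, hr, ← algebraMap_smul F c x, map_smul, smul_eq_mul]
  -- the comparison equivalence
  let φ : V ≃ₗ[F] V := eV.equiv fV' (Equiv.refl ι)
  have hφe : ∀ j, φ (e j) = fV' j := by
    intro j
    rw [← heV j]
    simp [φ]
  have hφae : ∀ j, φ (a' j • e j) = fV j := by
    intro j
    rw [← algebraMap_smul F (a' j) (e j), map_smul, hφe j, hfV' j, smul_smul,
      mul_inv_cancel₀ (ha0 j), one_smul]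
  let φO : V ≃ₗ[O] V := φ.restrictScalars O
  have hφM : Submodule.map (φO : V →ₗ[O] V) M = Ld := by
    rw [hMspan, hLd_eq, Submodule.map_span, ← Set.range_comp]
    exact congrArg (Submodule.span O) (congrArg Set.range (funext fun j => hφe j))
  have hφL : Submodule.map (φO : V →ₗ[O] V) L = Md := by
    rw [hLspan', hMd_eq, Submodule.map_span, ← Set.range_comp]
    exact congrArg (Submodule.span O) (congrArg Set.range (funext fun j => hφae j))
  let ψ : ↥M ≃ₗ[O] ↥Ld := (φO.submoduleMap M).trans (LinearEquiv.ofEq _ _ hφM)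
  have hψ : ∀ x : ↥M, (ψ x : V) = φO x := by
    intro x
    simp [ψ, LinearEquiv.submoduleMap_apply]
  have hcomap : (L.comap M.subtype).map (ψ : ↥M →ₗ[O] ↥Ld) = Md.comap Ld.subtype := by
    ext y
    simp only [Submodule.mem_map, Submodule.mem_comap, Submodule.subtype_apply,
      LinearEquiv.coe_coe]
    constructor
    · rintro ⟨x, hx, rfl⟩
      rw [hψ x]
      rw [← hφL]
      exact Submodule.mem_map_of_mem hx
    · intro hy
      rw [← hφL] at hy
      obtain ⟨x, hx, hxy⟩ := hy
      have hxM : x ∈ M := hLM hx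
      refine ⟨⟨x, hxM⟩, hx, ?_⟩
      apply Subtype.ext
      rw [hψ ⟨x, hxM⟩]
      exact hxy
  let equivQ : (↥M ⧸ L.comap M.subtype) ≃ₗ[O] (↥Ld ⧸ Md.comap Ld.subtype) :=
    Submodule.Quotient.equiv _ _ ψ hcomap
  unfold moduleLength
  exact Order.krullDim_eq_of_orderIso (Submodule.orderIsoMapComap equivQ.symm)
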